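/- arXiv:2412.07098 — 6 statements merged into one kernel-verified Lean document; each statement's English description precedes it below -/
import Mathlib

section
/- For every R ∈ ℕ, the number of spin-flip collections γ with min γ ≤ 0 ≤ max γ (equivalently 0 ∈ V(γ)) and cover size 𝒩(γ) ≤ R is at most e^{(5/2)(log 2)·R}. -/
noncomputable section

/-! An integer `k : ℤ` encodes the dual-lattice site (spin flip) `k + 1/2 ∈ ℤ + 1/2`;
a spin-flip collection is a finite set `γ : Finset ℤ` of even cardinality. -/

/-- Auxiliary greedy construction of the canonical cover (with fuel). -/
def coverAux (n : ℕ) : ℕ → Finset ℤ → Finset ℤ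
  | 0, _ => ∅
  | fuel + 1, γ =>
    if h : γ.Nonempty then
      insert (γ.min' h) (coverAux n fuel (γ.filter fun x => γ.min' h + 2 ^ n ≤ x))
    else ∅

/-- The left endpoints of the intervals of the canonical greedy cover `𝒾ₙ(γ)` of `γ` by
open intervals of diameter `2^n` with integer endpoints: `u ∈ cover n γ` encodes the
interval `(u, u + 2^n)`, which covers the spin flips `k + 1/2` with `u ≤ k < u + 2^n`. -/
def cover (n : ℕ) (γ : Finset ℤ) : Finset ℤ := coverAux n γ.card γ

/-- The diameter of `γ` (as a subset of `ℤ + 1/2`). -/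
def diamZ (γ : Finset ℤ) : ℤ := WithBot.unbotD 0 γ.max - WithTop.untopD 0 γ.min

/-- `n₀(γ) = ⌊log₂ diam γ⌋`. -/
def n0 (γ : Finset ℤ) : ℕ := Nat.log 2 (diamZ γ).toNat

/-- The cover size `𝒩(γ) = ∑_{n=0}^{n₀(γ)} |𝒾ₙ(γ)|`. -/
def coverSize (γ : Finset ℤ) : ℕ := ∑ n ∈ Finset.range (n0 γ + 1), (cover n γ).card

/-- The volume `V(γ) = [min γ, max γ] ∩ ℤ` (recall `k` encodes `k + 1/2`). -/
def vol (γ : Finset ℤ) : Finset ℤ := Finset.Icc (WithTop.untopD 0 γ.min + 1) (WithBot.unbotD 0 γ.max)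

def eW (x : ℕ) : ℕ := Nat.log 2 x + 1

/-- Finset of lists of positive naturals with total weight ≤ R (superset thereof). -/
def listsF : ℕ → Finset (List ℕ)
  | 0 => {[]}
  | R + 1 => insert []
      ((Finset.range (R + 1)).biUnion fun t =>
        (Finset.Ico (2 ^ t) (2 ^ (t + 1))).biUnion fun x =>
          (listsF (R - t)).image (x :: ·))

lemma card_listsF : ∀ R, (listsF R).card ≤ 3 ^ R := by
  intro R
  induction R using Nat.strong_induction_on with
  | _ R ih =>
    match R with
    | 0 => simp [listsF]
    | R + 1 =>
      have key : ∀ N : ℕ, ∑ t ∈ Finset.range (N + 1), 2 ^ t * 3 ^ (N - t)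
          = 3 ^ (N + 1) - 2 ^ (N + 1) := by
        intro N
        induction N with
        | zero => simp
        | succ N ihN =>
          rw [Finset.sum_range_succ]
          have : ∀ t ∈ Finset.range (N + 1), 2 ^ t * 3 ^ (N + 1 - t) = 3 * (2 ^ t * 3 ^ (N - t)) := by
            intro t ht
            simp only [Finset.mem_range] at ht
            have : N + 1 - t = (N - t) + 1 := by omega
            rw [this, pow_succ]; ring
          rw [Finset.sum_congr rfl this, ← Finset.mul_sum, ihN]
          have h2 : 2 ^ (N + 1) ≤ 3 ^ (N + 1) := Nat.pow_le_pow_left (by norm_num) _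
          have h3 : (2:ℕ) ^ (N+2) ≤ 3 ^ (N+2) := Nat.pow_le_pow_left (by norm_num) _
          simp [pow_succ]; omega
      calc (listsF (R + 1)).card
          ≤ ((Finset.range (R + 1)).biUnion fun t =>
              (Finset.Ico (2 ^ t) (2 ^ (t + 1))).biUnion fun x =>
                (listsF (R - t)).image (x :: ·)).card + 1 := by
            rw [listsF]; exact Finset.card_insert_le _ _
        _ ≤ (∑ t ∈ Finset.range (R + 1), 2 ^ t * 3 ^ (R - t)) + 1 := by
            gcongr
            refine le_trans (Finset.card_biUnion_le) ?_
            refine Finset.sum_le_sum fun t ht => ?_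
            refine le_trans (Finset.card_biUnion_le) ?_
            have : ∀ x ∈ Finset.Ico (2^t) (2^(t+1)), ((listsF (R - t)).image (x :: ·)).card ≤ 3 ^ (R - t) := by
              intro x hx
              exact le_trans (Finset.card_image_le) (ih (R - t) (by omega))
            refine le_trans (Finset.sum_le_sum this) ?_
            rw [Finset.sum_const, Nat.card_Ico]
            have : 2 ^ (t+1) - 2^t = 2^t := by rw [pow_succ]; omega
            simp [this, mul_comm]
        _ ≤ 3 ^ (R + 1) := by
            rw [key R]
            have h2 : 2 ^ (R + 1) ≤ 3 ^ (R + 1) := Nat.pow_le_pow_left (by norm_num) _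
            have h1 : 1 ≤ 2 ^ (R+1) := Nat.one_le_two_pow
            omega

lemma mem_listsF : ∀ (l : List ℕ) (R : ℕ), (∀ x ∈ l, 1 ≤ x) → (l.map eW).sum ≤ R → l ∈ listsF R := by
  intro l
  induction l with
  | nil => intro R _ _; cases R <;> simp [listsF]
  | cons x l ihl =>
    intro R hpos hsum
    simp only [List.map_cons, List.sum_cons, eW] at hsum
    have hx1 : 1 ≤ x := hpos x (by simp)
    obtain ⟨R', rfl⟩ : ∃ R', R = R' + 1 := ⟨R - 1, by omega⟩
    have hlog : Nat.log 2 x ≤ R' := by omega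
    rw [listsF]
    refine Finset.mem_insert_of_mem ?_
    rw [Finset.mem_biUnion]
    refine ⟨Nat.log 2 x, by simp [Nat.lt_succ_iff, hlog], ?_⟩
    rw [Finset.mem_biUnion]
    refine ⟨x, ?_, ?_⟩
    · simp only [Finset.mem_Ico]
      exact ⟨Nat.pow_log_le_self 2 (by omega), Nat.lt_pow_succ_log_self (by norm_num) x⟩
    · rw [Finset.mem_image]
      exact ⟨l, ihl _ (fun y hy => hpos y (by simp [hy])) (by omega), rfl⟩

def Dset (n : ℕ) (γ : Finset ℤ) : Finset ℤ :=
  γ.filter fun x => ∀ y ∈ γ, y < x → y + 2 ^ n ≤ x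

lemma Dset_subset (n : ℕ) (γ : Finset ℤ) : Dset n γ ⊆ γ := Finset.filter_subset _ _

lemma min'_mem_Dset (n : ℕ) {γ : Finset ℤ} (h : γ.Nonempty) : γ.min' h ∈ Dset n γ := by
  rw [Dset, Finset.mem_filter]
  exact ⟨Finset.min'_mem _ _, fun y hy hlt => absurd (Finset.min'_le _ _ hy) (by omega)⟩

lemma coverAux_subset (n : ℕ) : ∀ (fuel : ℕ) (γ : Finset ℤ), coverAux n fuel γ ⊆ γ := by
  intro fuel
  induction fuel with
  | zero => intro γ; simp [coverAux]
  | succ fuel ih =>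
    intro γ
    rw [coverAux]
    split
    · next h =>
      intro x hx
      rcases Finset.mem_insert.mp hx with rfl | hx
      · exact Finset.min'_mem _ _
      · exact Finset.filter_subset _ _ (ih _ hx)
    · simp

lemma card_Dset_le_coverAux (n : ℕ) : ∀ (fuel : ℕ) (γ : Finset ℤ), γ.card ≤ fuel →
    (Dset n γ).card ≤ (coverAux n fuel γ).card := by
  intro fuel
  induction fuel with
  | zero =>
    intro γ hγ
    have : γ = ∅ := Finset.card_eq_zero.mp (by omega)
    simp [this, Dset]
  | succ fuel ih =>
    intro γ hγ
    rw [coverAux]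
    split
    · next h =>
      set m := γ.min' h with hm
      set γ' := γ.filter (fun x => m + 2 ^ n ≤ x) with hγ'
      have hmnot : m ∉ γ' := by
        simp only [hγ', Finset.mem_filter]
        rintro ⟨-, h2⟩
        have : (0:ℤ) < 2 ^ n := by positivity
        omega
      have hcard' : γ'.card ≤ fuel := by
        have : γ' ⊆ γ.erase m := by
          intro x hx
          simp only [hγ', Finset.mem_filter] at hx
          refine Finset.mem_erase.mpr ⟨?_, hx.1⟩
          have : (0:ℤ) < 2 ^ n := by positivity
          omega
        have := Finset.card_le_card this
        rw [Finset.card_erase_of_mem (Finset.min'_mem _ _)] at this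
        omega
      have hsub : Dset n γ ⊆ insert m (Dset n γ') := by
        intro x hx
        rcases eq_or_ne x m with rfl | hne
        · exact Finset.mem_insert_self _ _
        · refine Finset.mem_insert_of_mem ?_
          simp only [Dset, Finset.mem_filter] at hx ⊢
          have hxγ := hx.1
          have hmx : m < x := lt_of_le_of_ne (Finset.min'_le _ _ hxγ) (Ne.symm hne)
          have hx2 : m + 2 ^ n ≤ x := hx.2 m (Finset.min'_mem _ _) hmx
          refine ⟨Finset.mem_filter.mpr ⟨hxγ, hx2⟩, fun y hy hlt => hx.2 y (Finset.filter_subset _ _ hy) hlt⟩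
      have hnotmem : m ∉ coverAux n fuel γ' := fun hc => hmnot (coverAux_subset n fuel γ' hc)
      calc (Dset n γ).card ≤ (insert m (Dset n γ')).card := Finset.card_le_card hsub
        _ ≤ (Dset n γ').card + 1 := Finset.card_insert_le _ _
        _ ≤ (coverAux n fuel γ').card + 1 := by have := ih γ' hcard'; omega
        _ = (insert m (coverAux n fuel γ')).card := (Finset.card_insert_of_notMem hnotmem).symm
    · next h =>
      have : γ = ∅ := Finset.not_nonempty_iff_eq_empty.mp h
      simp [this, Dset]

lemma card_Dset_le_cover (n : ℕ) (γ : Finset ℤ) : (Dset n γ).card ≤ (cover n γ).card :=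
  card_Dset_le_coverAux n γ.card γ le_rfl

/-- gaps of γ: consecutive differences of sorted elements. -/
def gapsL (γ : Finset ℤ) : List ℕ :=
  if h : 1 < γ.card then
    have h0 : γ.Nonempty := Finset.card_pos.mp (by omega)
    have h1 : (γ.erase (γ.min' h0)).Nonempty := by
      rw [← Finset.card_pos, Finset.card_erase_of_mem (Finset.min'_mem _ _)]; omega
    ((γ.erase (γ.min' h0)).min' h1 - γ.min' h0).toNat :: gapsL (γ.erase (γ.min' h0))
  else []
termination_by γ.card
decreasing_by
  rw [Finset.card_erase_of_mem (Finset.min'_mem _ _)]; omega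

lemma gapsL_of_le {γ : Finset ℤ} (h : ¬ 1 < γ.card) : gapsL γ = [] := by
  rw [gapsL]; simp [h]

lemma gapsL_of_lt {γ : Finset ℤ} (h : 1 < γ.card) (h0 : γ.Nonempty)
    (h1 : (γ.erase (γ.min' h0)).Nonempty) :
    gapsL γ = ((γ.erase (γ.min' h0)).min' h1 - γ.min' h0).toNat :: gapsL (γ.erase (γ.min' h0)) := by
  rw [gapsL]; simp [h]

lemma gapsL_bounds : ∀ (γ : Finset ℤ) (h0 : γ.Nonempty), ∀ g ∈ gapsL γ,
    1 ≤ g ∧ (g : ℤ) ≤ γ.max' h0 - γ.min' h0 := by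
  intro γ
  induction γ using Finset.strongInductionOn with
  | _ γ ih =>
    intro h0 g hg
    by_cases h : 1 < γ.card
    · have h1 : (γ.erase (γ.min' h0)).Nonempty := by
        rw [← Finset.card_pos, Finset.card_erase_of_mem (Finset.min'_mem _ _)]; omega
      rw [gapsL_of_lt h h0 h1] at hg
      set m := γ.min' h0
      set γ' := γ.erase m
      set m2 := γ'.min' h1
      have hm2γ : m2 ∈ γ := Finset.erase_subset _ _ (Finset.min'_mem _ h1)
      have hmm2 : m < m2 := by
        have := Finset.min'_le γ m2 hm2γ
        have hne : m2 ≠ m := Finset.ne_of_mem_erase (Finset.min'_mem _ h1)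
        omega
      rcases List.mem_cons.mp hg with rfl | hg'
      · constructor
        · omega
        · have : ((m2 - m).toNat : ℤ) = m2 - m := Int.toNat_of_nonneg (by omega)
          have hle : m2 ≤ γ.max' h0 := Finset.le_max' _ _ hm2γ
          omega
      · have hsub : γ' ⊆ γ := Finset.erase_subset _ _
        obtain ⟨hg1, hg2⟩ := ih γ' (Finset.erase_ssubset (Finset.min'_mem _ h0)) h1 g hg'
        refine ⟨hg1, ?_⟩
        have hmax : γ'.max' h1 ≤ γ.max' h0 := Finset.max'_subset h1 hsub
        have : γ'.min' h1 = m2 := rfl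
        omega
    · rw [gapsL_of_le h] at hg; simp at hg

lemma one_add_countP_le_card_Dset (n : ℕ) : ∀ (γ : Finset ℤ), γ.Nonempty →
    1 + (gapsL γ).countP (fun g => 2 ^ n ≤ g) ≤ (Dset n γ).card := by
  intro γ
  induction γ using Finset.strongInductionOn with
  | _ γ ih =>
    intro h0
    by_cases h : 1 < γ.card
    · have h1 : (γ.erase (γ.min' h0)).Nonempty := by
        rw [← Finset.card_pos, Finset.card_erase_of_mem (Finset.min'_mem _ _)]; omega
      rw [gapsL_of_lt h h0 h1, List.countP_cons]
      set m := γ.min' h0 with hmdef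
      set γ' := γ.erase m with hγ'def
      set m2 := γ'.min' h1 with hm2def
      have hm2γ : m2 ∈ γ := Finset.erase_subset _ _ (Finset.min'_mem _ h1)
      have hmm2 : m < m2 := by
        have := Finset.min'_le γ m2 hm2γ
        have hne : m2 ≠ m := Finset.ne_of_mem_erase (Finset.min'_mem _ h1)
        omega
      have ihD : 1 + (gapsL γ').countP (fun g => 2 ^ n ≤ g) ≤ (Dset n γ').card :=
        ih γ' (Finset.erase_ssubset (Finset.min'_mem _ h0)) h1
      have hmD : m ∈ Dset n γ := min'_mem_Dset n h0
      have hm2D' : m2 ∈ Dset n γ' := min'_mem_Dset n h1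
      -- erased elements of Dset γ' belong to Dset γ
      have hsub : (Dset n γ').erase m2 ⊆ Dset n γ := by
        intro x hx
        obtain ⟨hxne, hxD⟩ := Finset.mem_erase.mp hx
        simp only [Dset, Finset.mem_filter] at hxD ⊢
        have hxγ' : x ∈ γ' := hxD.1
        have hxγ : x ∈ γ := Finset.erase_subset _ _ hxγ'
        have hm2x : m2 < x := lt_of_le_of_ne (Finset.min'_le _ _ hxγ') (Ne.symm hxne)
        refine ⟨hxγ, fun y hy hlt => ?_⟩
        rcases eq_or_ne y m with rfl | hyne
        · have := hxD.2 m2 (Finset.min'_mem _ h1) hm2x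
          omega
        · exact hxD.2 y (Finset.mem_erase.mpr ⟨hyne, hy⟩) hlt
      have hmnot : m ∉ (Dset n γ').erase m2 := by
        intro hc
        exact (Finset.notMem_erase m γ) (Dset_subset n γ' (Finset.erase_subset _ _ hc))
      by_cases hbig : 2 ^ n ≤ ((m2 - m).toNat)
      · -- m2 ∈ Dset n γ as well
        have hm2D : m2 ∈ Dset n γ := by
          simp only [Dset, Finset.mem_filter]
          refine ⟨hm2γ, fun y hy hlt => ?_⟩
          have hym : y = m := by
            by_contra hyne
            have : y ∈ γ' := Finset.mem_erase.mpr ⟨hyne, hy⟩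
            have := Finset.min'_le γ' y this
            omega
          subst hym
          have : ((m2 - m).toNat : ℤ) = m2 - m := Int.toNat_of_nonneg (by omega)
          have h2n : ((2:ℤ)^n) ≤ m2 - m := by
            have := hbig
            have h2 : ((2:ℕ)^n : ℤ) = (2:ℤ)^n := by push_cast; ring
            omega
          omega
        have hins : insert m (insert m2 ((Dset n γ').erase m2)) ⊆ Dset n γ := by
          intro x hx
          rcases Finset.mem_insert.mp hx with rfl | hx
          · exact hmD
          rcases Finset.mem_insert.mp hx with rfl | hx
          · exact hm2D
          · exact hsub hx
        have hcard : (insert m (insert m2 ((Dset n γ').erase m2))).card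
            = 1 + (Dset n γ').card := by
          rw [Finset.card_insert_of_notMem, Finset.card_insert_of_notMem (Finset.notMem_erase _ _),
            Finset.card_erase_of_mem hm2D']
          · have : 0 < (Dset n γ').card := Finset.card_pos.mpr ⟨m2, hm2D'⟩
            omega
          · simp only [Finset.mem_insert]
            push_neg
            exact ⟨by omega, hmnot⟩
        have hle := Finset.card_le_card hins
        rw [hcard] at hle
        have hdec : (decide (2 ^ n ≤ (m2 - m).toNat)) = true := decide_eq_true hbig
        rw [if_pos (by simpa using hbig)]
        have hsame : gapsL (γ.erase (γ.min' h0)) = gapsL γ' := rfl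
        rw [hsame]
        omega
      · have hins : insert m ((Dset n γ').erase m2) ⊆ Dset n γ := by
          intro x hx
          rcases Finset.mem_insert.mp hx with rfl | hx
          · exact hmD
          · exact hsub hx
        have hcard : (insert m ((Dset n γ').erase m2)).card = (Dset n γ').card := by
          rw [Finset.card_insert_of_notMem hmnot, Finset.card_erase_of_mem hm2D']
          have : 0 < (Dset n γ').card := Finset.card_pos.mpr ⟨m2, hm2D'⟩
          omega
        have hle := Finset.card_le_card hins
        rw [hcard] at hle
        have hdec : (decide (2 ^ n ≤ (m2 - m).toNat)) = false := decide_eq_false hbig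
        rw [if_neg (by simpa using hbig)]
        have hsame : gapsL (γ.erase (γ.min' h0)) = gapsL γ' := rfl
        rw [hsame]
        omega
    · rw [gapsL_of_le h]
      simp only [List.countP_nil]
      have : (Dset n γ).Nonempty := ⟨γ.min' h0, min'_mem_Dset n h0⟩
      have := Finset.card_pos.mpr this
      omega

lemma sum_ite_le {N L : ℕ} (h : L < N) :
    ∑ n ∈ Finset.range N, (if n ≤ L then 1 else 0) = L + 1 := by
  rw [← Finset.sum_filter]
  have : (Finset.range N).filter (fun n => n ≤ L) = Finset.range (L + 1) := by
    ext n; simp only [Finset.mem_filter, Finset.mem_range, Nat.lt_succ_iff]; omega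
  rw [this]; simp

lemma sum_eW_le (N : ℕ) : ∀ (l : List ℕ), (∀ g ∈ l, 1 ≤ g ∧ Nat.log 2 g < N) →
    (l.map eW).sum ≤ ∑ n ∈ Finset.range N, (l.countP (fun g => 2 ^ n ≤ g)) := by
  intro l
  induction l with
  | nil => simp
  | cons g l ih =>
    intro hl
    obtain ⟨hg1, hgN⟩ := hl g (by simp)
    simp only [List.map_cons, List.sum_cons, List.countP_cons]
    rw [Finset.sum_add_distrib]
    have h1 : ∑ n ∈ Finset.range N, (if (decide (2 ^ n ≤ g)) = true then 1 else 0) = eW g := by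
      have hiff : ∀ n : ℕ, ((decide (2 ^ n ≤ g)) = true) ↔ (n ≤ Nat.log 2 g) := by
        intro n
        rw [decide_eq_true_eq]
        exact (Nat.le_log_iff_pow_le (by norm_num) (by omega)).symm
      calc ∑ n ∈ Finset.range N, (if (decide (2 ^ n ≤ g)) = true then 1 else 0)
          = ∑ n ∈ Finset.range N, (if n ≤ Nat.log 2 g then 1 else 0) := by
            refine Finset.sum_congr rfl fun n _ => ?_
            by_cases hc : n ≤ Nat.log 2 g
            · rw [if_pos ((hiff n).mpr hc), if_pos hc]
            · rw [if_neg (fun hh => hc ((hiff n).mp hh)), if_neg hc]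
        _ = Nat.log 2 g + 1 := sum_ite_le hgN
        _ = eW g := rfl
    have h2 := ih (fun x hx => hl x (by simp [hx]))
    omega

lemma diamZ_eq {γ : Finset ℤ} (h0 : γ.Nonempty) : diamZ γ = γ.max' h0 - γ.min' h0 := by
  rw [diamZ, ← Finset.coe_max' h0, ← Finset.coe_min' h0]
  rfl

lemma encode_weight_le (γ : Finset ℤ) (h0 : γ.Nonempty)
    (hmin : γ.min' h0 ≤ -1) (hmax : 0 ≤ γ.max' h0) :
    eW ((-(γ.min' h0)).toNat) + ((gapsL γ).map eW).sum ≤ coverSize γ := by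
  have hdiam := diamZ_eq h0
  set a := (-(γ.min' h0)).toNat with ha
  have haZ : (a : ℤ) = -(γ.min' h0) := Int.toNat_of_nonneg (by omega)
  have haD : a ≤ (diamZ γ).toNat := by
    apply Int.toNat_le_toNat; omega
  have hloga : Nat.log 2 a ≤ n0 γ := Nat.log_mono_right haD
  have hgaps : ∀ g ∈ gapsL γ, 1 ≤ g ∧ Nat.log 2 g < n0 γ + 1 := by
    intro g hg
    obtain ⟨hg1, hg2⟩ := gapsL_bounds γ h0 g hg
    refine ⟨hg1, Nat.lt_succ_of_le (Nat.log_mono_right ?_)⟩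
    have : (g : ℤ) ≤ diamZ γ := by omega
    omega
  have hswap := sum_eW_le (n0 γ + 1) (gapsL γ) hgaps
  have hcnt : ∀ n, 1 + (gapsL γ).countP (fun g => 2 ^ n ≤ g) ≤ (cover n γ).card :=
    fun n => le_trans (one_add_countP_le_card_Dset n γ h0) (card_Dset_le_cover n γ)
  have hsum : ∑ n ∈ Finset.range (n0 γ + 1), (1 + (gapsL γ).countP (fun g => 2 ^ n ≤ g))
      ≤ coverSize γ := Finset.sum_le_sum fun n _ => hcnt n
  rw [Finset.sum_add_distrib, Finset.sum_const, Finset.card_range, smul_eq_mul, mul_one] at hsum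
  have : eW a ≤ n0 γ + 1 := by rw [eW]; omega
  omega

lemma recover : ∀ (γ1 γ2 : Finset ℤ) (h1 : γ1.Nonempty) (h2 : γ2.Nonempty),
    γ1.min' h1 = γ2.min' h2 → gapsL γ1 = gapsL γ2 → γ1 = γ2 := by
  intro γ1
  induction γ1 using Finset.strongInductionOn with
  | _ γ1 ih =>
    intro γ2 h1 h2 hmin hgaps
    by_cases hc1 : 1 < γ1.card
    · have he1 : (γ1.erase (γ1.min' h1)).Nonempty := by
        rw [← Finset.card_pos, Finset.card_erase_of_mem (Finset.min'_mem _ _)]; omega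
      rw [gapsL_of_lt hc1 h1 he1] at hgaps
      by_cases hc2 : 1 < γ2.card
      · have he2 : (γ2.erase (γ2.min' h2)).Nonempty := by
          rw [← Finset.card_pos, Finset.card_erase_of_mem (Finset.min'_mem _ _)]; omega
        rw [gapsL_of_lt hc2 h2 he2] at hgaps
        injection hgaps with hhead htail
        set m1 := γ1.min' h1
        set m2 := γ2.min' h2
        set n1 := (γ1.erase m1).min' he1 with hn1
        set n2 := (γ2.erase m2).min' he2 with hn2
        have hm1n1 : m1 < n1 := by
          have hmem : n1 ∈ γ1 := Finset.erase_subset _ _ (Finset.min'_mem _ he1)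
          have := Finset.min'_le γ1 n1 hmem
          have hne : n1 ≠ m1 := Finset.ne_of_mem_erase (Finset.min'_mem _ he1)
          omega
        have hm2n2 : m2 < n2 := by
          have hmem : n2 ∈ γ2 := Finset.erase_subset _ _ (Finset.min'_mem _ he2)
          have := Finset.min'_le γ2 n2 hmem
          have hne : n2 ≠ m2 := Finset.ne_of_mem_erase (Finset.min'_mem _ he2)
          omega
        have hv1 : ((n1 - m1).toNat : ℤ) = n1 - m1 := Int.toNat_of_nonneg (by omega)
        have hv2 : ((n2 - m2).toNat : ℤ) = n2 - m2 := Int.toNat_of_nonneg (by omega)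
        have hn12 : n1 = n2 := by
          have : ((n1 - m1).toNat : ℤ) = ((n2 - m2).toNat : ℤ) := by rw [hhead]
          omega
        have herase : γ1.erase m1 = γ2.erase m2 :=
          ih (γ1.erase m1) (Finset.erase_ssubset (Finset.min'_mem _ h1)) (γ2.erase m2)
            he1 he2 (by rw [← hn1, ← hn2]; exact hn12) htail
        calc γ1 = insert m1 (γ1.erase m1) := (Finset.insert_erase (Finset.min'_mem _ h1)).symm
          _ = insert m2 (γ2.erase m2) := by rw [herase, hmin]
          _ = γ2 := Finset.insert_erase (Finset.min'_mem _ h2)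
      · rw [gapsL_of_le hc2] at hgaps; exact absurd hgaps (List.cons_ne_nil _ _)
    · rw [gapsL_of_le hc1] at hgaps
      by_cases hc2 : 1 < γ2.card
      · have he2 : (γ2.erase (γ2.min' h2)).Nonempty := by
          rw [← Finset.card_pos, Finset.card_erase_of_mem (Finset.min'_mem _ _)]; omega
        rw [gapsL_of_lt hc2 h2 he2] at hgaps
        exact absurd hgaps.symm (List.cons_ne_nil _ _)
      · have hcard1 : γ1.card = 1 := by
          have := Finset.card_pos.mpr h1; omega
        have hcard2 : γ2.card = 1 := by
          have := Finset.card_pos.mpr h2; omega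
        obtain ⟨x, hx⟩ := Finset.card_eq_one.mp hcard1
        obtain ⟨y, hy⟩ := Finset.card_eq_one.mp hcard2
        subst hx; subst hy
        have : ({x} : Finset ℤ).min' h1 = x := by simp
        have hy2 : ({y} : Finset ℤ).min' h2 = y := by simp
        rw [this, hy2] at hmin
        rw [hmin]

/-- entropy bound (Theorem `entropication`): the number of spin-flip
collections `γ` with `0 ∈ V(γ)` and `𝒩(γ) ≤ R` is at most `e^{(5/2)(log 2) R}`. -/
theorem entropy_bound (R : ℕ) :
    {γ : Finset ℤ | γ.Nonempty ∧ Even γ.card ∧ (0 : ℤ) ∈ vol γ ∧ coverSize γ ≤ R}.Finite ∧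
      (({γ : Finset ℤ | γ.Nonempty ∧ Even γ.card ∧ (0 : ℤ) ∈ vol γ ∧
          coverSize γ ≤ R}.ncard : ℝ) ≤ Real.exp (5 / 2 * Real.log 2 * R)) := by
  set S := {γ : Finset ℤ | γ.Nonempty ∧ Even γ.card ∧ (0 : ℤ) ∈ vol γ ∧ coverSize γ ≤ R} with hS
  set f : Finset ℤ → List ℕ := fun γ => (-(WithTop.untopD 0 γ.min)).toNat :: gapsL γ with hf
  -- basic facts on members of S
  have hfacts : ∀ γ ∈ S, ∃ h0 : γ.Nonempty,
      WithTop.untopD 0 γ.min = γ.min' h0 ∧ γ.min' h0 ≤ -1 ∧ 0 ≤ γ.max' h0 := by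
    intro γ hγ
    obtain ⟨h0, -, hvol, -⟩ := hγ
    refine ⟨h0, ?_, ?_, ?_⟩
    · rw [← Finset.coe_min' h0]; rfl
    · have h1 : WithTop.untopD 0 γ.min = γ.min' h0 := by rw [← Finset.coe_min' h0]; rfl
      have := (Finset.mem_Icc.mp hvol).1
      omega
    · have h2 : WithBot.unbotD 0 γ.max = γ.max' h0 := by rw [← Finset.coe_max' h0]; rfl
      have := (Finset.mem_Icc.mp hvol).2
      omega
  -- image of S under f lies in listsF R
  have hmem : ∀ γ ∈ S, f γ ∈ listsF R := by
    intro γ hγ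
    obtain ⟨h0, hmeq, hmin, hmax⟩ := hfacts γ hγ
    obtain ⟨-, -, -, hcs⟩ := hγ
    apply mem_listsF
    · intro x hx
      rcases List.mem_cons.mp hx with rfl | hx
      · simp only [hmeq]; omega
      · exact (gapsL_bounds γ h0 x hx).1
    · have : ((f γ).map eW).sum = eW ((-(γ.min' h0)).toNat) + ((gapsL γ).map eW).sum := by
        simp [hf, hmeq]
      rw [this]
      exact le_trans (encode_weight_le γ h0 hmin hmax) hcs
  -- injectivity of f on S
  have hinj : Set.InjOn f S := by
    intro γ1 hγ1 γ2 hγ2 heq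
    obtain ⟨h1, hmeq1, hmin1, -⟩ := hfacts γ1 hγ1
    obtain ⟨h2, hmeq2, hmin2, -⟩ := hfacts γ2 hγ2
    simp only [hf, List.cons.injEq] at heq
    obtain ⟨hhead, htail⟩ := heq
    rw [hmeq1, hmeq2] at hhead
    have hmin12 : γ1.min' h1 = γ2.min' h2 := by omega
    exact recover γ1 γ2 h1 h2 hmin12 htail
  have himgsub : f '' S ⊆ ↑(listsF R) := by
    rintro _ ⟨γ, hγ, rfl⟩
    exact hmem γ hγ
  have hfin : S.Finite :=
    Set.Finite.of_finite_image (Set.Finite.subset (listsF R).finite_toSet himgsub) hinj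
  refine ⟨hfin, ?_⟩
  have hcardnat : S.ncard ≤ 3 ^ R := by
    calc S.ncard = (f '' S).ncard := (Set.ncard_image_of_injOn hinj).symm
      _ ≤ (↑(listsF R) : Set (List ℕ)).ncard :=
          Set.ncard_le_ncard himgsub (listsF R).finite_toSet
      _ = (listsF R).card := Set.ncard_coe_finset _
      _ ≤ 3 ^ R := card_listsF R
  have hreal : ((3 : ℝ) ^ R) ≤ Real.exp (5 / 2 * Real.log 2 * R) := by
    set t := Real.exp (5 / 2 * Real.log 2 * (R : ℝ)) with ht
    have htpos : 0 < t := Real.exp_pos _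
    have ht2 : t ^ 2 = 2 ^ (5 * R) := by
      rw [ht, sq, ← Real.exp_add]
      have : 5 / 2 * Real.log 2 * (R : ℝ) + 5 / 2 * Real.log 2 * (R : ℝ)
          = ((5 * R : ℕ) : ℝ) * Real.log 2 := by push_cast; ring
      rw [this, Real.exp_nat_mul, Real.exp_log (by norm_num)]
    have h2 : ((3 : ℝ) ^ R) ^ 2 ≤ t ^ 2 := by
      rw [ht2]
      calc ((3 : ℝ) ^ R) ^ 2 = 9 ^ R := by rw [← pow_mul, mul_comm, pow_mul]; norm_num
        _ ≤ 32 ^ R := pow_le_pow_left₀ (by norm_num) (by norm_num) R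
        _ = 2 ^ (5 * R) := by rw [pow_mul]; norm_num
    have := (pow_le_pow_iff_left₀ (by positivity) htpos.le (two_ne_zero)).mp h2
    exact this
  calc (S.ncard : ℝ) ≤ ((3 ^ R : ℕ) : ℝ) := by exact_mod_cast hcardnat
    _ = (3 : ℝ) ^ R := by push_cast; ring
    _ ≤ _ := hreal
end
end

section
/- Let h:ℤ→ℝ_{≥0}, let Γ be a well-ordered finite family of pairwise disjoint spin-flip collections, and let γ ∈ Γ be external. Then |E_h(Γ) − E_h(Γ∖{γ})| ≤ E_h(γ), where E_h(γ) = 2∑_{x∈I₋(γ)} h_x and E_h(Γ) = 2∑_{x∈N(Γ)} h_x. -/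
noncomputable section
open scoped Classical

/-! An integer `k : ℤ` encodes the dual-lattice site (spin flip) `k + 1/2 ∈ ℤ + 1/2`. -/

/-- The number of spin flips of `γ` lying strictly to the right of the integer site `x`. -/
def cntR (γ : Finset ℤ) (x : ℤ) : ℕ := (γ.filter fun k => x ≤ k).card

/-- The minus-interior `I₋(γ)`: the integers `x` such that the number of spin flips of
`γ` to the right of `x` is odd. -/
def Iminus (γ : Finset ℤ) : Finset ℤ :=
  (Finset.Icc (WithTop.untopD 0 γ.min) (WithBot.unbotD 0 γ.max)).filter fun x => Odd (cntR γ x)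

/-- `γ < γ'`: `γ` is contained in the open interval between two consecutive spin flips
of `γ'`. -/
def ltC (γ γ' : Finset ℤ) : Prop :=
  ∃ u ∈ γ', ∃ v ∈ γ', u < v ∧ (∀ w ∈ γ', ¬(u < w ∧ w < v)) ∧ ∀ x ∈ γ, u < x ∧ x < v

/-- `Γ` is a well-ordered finite family of pairwise disjoint spin-flip collections. -/
def WellOrdered (Γ : Finset (Finset ℤ)) : Prop :=
  (∀ g ∈ Γ, g.Nonempty ∧ Even g.card) ∧ (Γ : Set (Finset ℤ)).PairwiseDisjoint id ∧
    ∀ g ∈ Γ, ∀ g' ∈ Γ, g ≠ g' → ¬ltC g g' → ¬ltC g' g → Disjoint (vol g) (vol g')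

/-- `N(Γ)`: the integers `x` such that the number of spin flips of `⋃Γ` to the right of
`x` is odd. -/
def NSet (Γ : Finset (Finset ℤ)) : Finset ℤ := Iminus (Γ.sup id)


lemma mem_Iminus_iff {S : Finset ℤ} (hS : Even S.card) (x : ℤ) :
    x ∈ Iminus S ↔ Odd (cntR S x) := by
  constructor
  · exact fun hx => (Finset.mem_filter.mp hx).2
  · intro hx
    rcases S.eq_empty_or_nonempty with rfl | hne
    · simp [cntR] at hx
    refine Finset.mem_filter.mpr ⟨?_, hx⟩
    have hmin : WithTop.untopD 0 S.min = S.min' hne := by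
      rw [← Finset.coe_min' hne]; rfl
    have hmax : WithBot.unbotD 0 S.max = S.max' hne := by
      rw [← Finset.coe_max' hne]; rfl
    rw [hmin, hmax, Finset.mem_Icc]
    obtain ⟨k, hk⟩ : (S.filter fun k => x ≤ k).Nonempty := by
      rw [← Finset.card_pos]; exact hx.pos
    rw [Finset.mem_filter] at hk
    constructor
    · by_contra hc
      push_neg at hc
      have : (S.filter fun k => x ≤ k) = S := by
        apply Finset.filter_true_of_mem
        intro y hy
        exact le_trans hc.le (Finset.min'_le S y hy)
      rw [cntR, this] at hx
      exact (Nat.not_odd_iff_even.mpr hS) hx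
    · exact le_trans hk.2 (Finset.le_max' S k hk.1)

lemma cntR_union {A B : Finset ℤ} (hd : Disjoint A B) (x : ℤ) :
    cntR (A ∪ B) x = cntR A x + cntR B x := by
  unfold cntR
  rw [Finset.filter_union, Finset.card_union_of_disjoint
    (Finset.disjoint_filter_filter hd)]

lemma even_card_sup {Γ : Finset (Finset ℤ)}
    (hev : ∀ g ∈ Γ, Even g.card)
    (hd : (Γ : Set (Finset ℤ)).PairwiseDisjoint id) :
    Even (Γ.sup id).card := by
  rw [Finset.sup_eq_biUnion, Finset.card_biUnion
    (fun x hx y hy hxy => hd hx hy hxy)]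
  exact Finset.even_sum _ (fun g hg => hev g hg)

/-- the field energy `E_h(Γ) = 2∑_{x∈N(Γ)} h_x` changes by at most
`E_h(γ) = 2∑_{x∈I₋(γ)} h_x` when an external member `γ` is removed. -/
theorem field_energy_estimate (h : ℤ → ℝ) (hpos : ∀ x, 0 ≤ h x)
    (Γ : Finset (Finset ℤ)) (hwo : WellOrdered Γ)
    (γ : Finset ℤ) (hγ : γ ∈ Γ) (hext : ∀ γ' ∈ Γ, ¬ltC γ γ') :
    |2 * ∑ x ∈ NSet Γ, h x - 2 * ∑ x ∈ NSet (Γ.erase γ), h x|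
      ≤ 2 * ∑ x ∈ Iminus γ, h x := by
  
  obtain ⟨hne, hd, -⟩ := hwo
  have hevΓ : Even (Γ.sup id).card :=
    even_card_sup (fun g hg => (hne g hg).2) hd
  have hevE : Even ((Γ.erase γ).sup id).card :=
    even_card_sup (fun g hg => (hne g (Finset.mem_of_mem_erase hg)).2)
      (hd.subset (fun g hg => Finset.mem_of_mem_erase hg))
  have hevγ : Even γ.card := (hne γ hγ).2
  have hdisj : Disjoint γ ((Γ.erase γ).sup id) := by
    rw [Finset.disjoint_sup_right]
    intro g hg
    exact hd hγ (Finset.mem_of_mem_erase hg)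
      (Finset.ne_of_mem_erase hg).symm
  have hsup : Γ.sup id = γ ∪ (Γ.erase γ).sup id := by
    conv_lhs => rw [← Finset.insert_erase hγ]
    rw [Finset.sup_insert, Finset.sup_eq_union, id]
  set B := NSet (Γ.erase γ) with hB
  set I := Iminus γ with hI
  have hsplit : NSet Γ = (I \ B) ∪ (B \ I) := by
    ext x
    rw [Finset.mem_union, Finset.mem_sdiff, Finset.mem_sdiff, NSet,
      mem_Iminus_iff hevΓ, hsup, cntR_union hdisj, Nat.odd_add]
    have h1 : x ∈ I ↔ Odd (cntR γ x) := mem_Iminus_iff hevγ x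
    have h2 : x ∈ B ↔ Odd (cntR ((Γ.erase γ).sup id) x) := mem_Iminus_iff hevE x
    rw [h1, h2, Nat.not_odd_iff_even.symm]
    tauto
  have hdsd : Disjoint (I \ B) (B \ I) := disjoint_sdiff_sdiff
  have hsumA : ∑ x ∈ NSet Γ, h x = ∑ x ∈ I \ B, h x + ∑ x ∈ B \ I, h x := by
    rw [hsplit, Finset.sum_union hdsd]
  have hsumB : ∑ x ∈ B, h x = ∑ x ∈ B ∩ I, h x + ∑ x ∈ B \ I, h x :=
    (Finset.sum_inter_add_sum_sdiff B I h).symm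
  have h1 : ∑ x ∈ I \ B, h x ≤ ∑ x ∈ I, h x :=
    Finset.sum_le_sum_of_subset_of_nonneg (Finset.sdiff_subset)
      (fun x _ _ => hpos x)
  have h2 : ∑ x ∈ B ∩ I, h x ≤ ∑ x ∈ I, h x :=
    Finset.sum_le_sum_of_subset_of_nonneg (Finset.inter_subset_right)
      (fun x _ _ => hpos x)
  have h3 : 0 ≤ ∑ x ∈ I \ B, h x := Finset.sum_nonneg (fun x _ => hpos x)
  have h4 : 0 ≤ ∑ x ∈ B ∩ I, h x := Finset.sum_nonneg (fun x _ => hpos x)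
  rw [abs_sub_le_iff]
  constructor <;> linarith
end
end

section
/- Let 1 < a < 2 and M > 1, and define s:ℤ→ℤ by s(n) = ⌊(n − log₂(8M))/a⌋. Then for all integers m ≥ 1 and j ≥ 1, the set S_{m,j} = {n ∈ ℕ : s^m(n) = j} (s^m the m-fold iterate of s) satisfies |S_{m,j}| ≤ (3a/(a−1))·a^m. -/
noncomputable section

/-- The scale-connecting function `s(n) = ⌊(n − log₂(8M))/a⌋`. -/
def sZ (M a : ℝ) (n : ℤ) : ℤ := ⌊((n : ℝ) - Real.logb 2 (8 * M)) / a⌋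

/-- Length of the interval containing the `m`-fold preimage. -/
def Laux (a : ℝ) : ℕ → ℝ
  | 0 => 1
  | (m+1) => a * Laux a m + a

lemma Laux_nonneg (a : ℝ) (ha : 0 < a) : ∀ m, 0 ≤ Laux a m := by
  intro m
  induction m with
  | zero => norm_num [Laux]
  | succ m ih => simp only [Laux]; nlinarith

lemma sZ_interval (M a : ℝ) (ha : 0 < a) (j : ℤ) :
    ∀ m : ℕ, ∃ u : ℝ, ∀ n : ℤ, (sZ M a)^[m] n = j →
      u ≤ (n : ℝ) ∧ (n : ℝ) < u + Laux a m := by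
  intro m
  induction m with
  | zero =>
    refine ⟨(j : ℝ), ?_⟩
    intro n h
    simp only [Function.iterate_zero, id_eq] at h
    subst h
    simp [Laux]
  | succ m ih =>
    obtain ⟨u, hu⟩ := ih
    refine ⟨Real.logb 2 (8 * M) + a * u, ?_⟩
    intro n h
    rw [Function.iterate_succ_apply] at h
    obtain ⟨h1, h2⟩ := hu _ h
    have hf1 : (sZ M a n : ℝ) ≤ ((n : ℝ) - Real.logb 2 (8 * M)) / a := Int.floor_le _
    have hf2 : ((n : ℝ) - Real.logb 2 (8 * M)) / a < (sZ M a n : ℝ) + 1 :=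
      Int.lt_floor_add_one _
    have hA : u ≤ ((n : ℝ) - Real.logb 2 (8 * M)) / a := h1.trans hf1
    have hB : ((n : ℝ) - Real.logb 2 (8 * M)) / a < u + Laux a m + 1 := by linarith
    have hA' : u * a ≤ (n : ℝ) - Real.logb 2 (8 * M) := (le_div_iff₀ ha).mp hA
    have hB' : (n : ℝ) - Real.logb 2 (8 * M) < (u + Laux a m + 1) * a :=
      (div_lt_iff₀ ha).mp hB
    simp only [Laux]
    constructor <;> nlinarith

lemma Laux_bound (a : ℝ) (ha : 1 < a) :
    ∀ m, 1 ≤ m → (a - 1) * (Laux a m + 1) + 1 ≤ 3 * a * a ^ m := by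
  intro m hm
  induction m, hm using Nat.le_induction with
  | base => simp only [Laux]; nlinarith
  | succ m hm ih =>
    have hp : (0 : ℝ) < a ^ m := pow_pos (by linarith) m
    have h2 : a * ((a - 1) * (Laux a m + 1) + 1) ≤ a * (3 * a * a ^ m) :=
      mul_le_mul_of_nonneg_left ih (by linarith)
    simp only [Laux, pow_succ]
    nlinarith

/-- the preimage counting bound `|S_{m,j}| ≤ (3a/(a−1))·a^m`
for the `m`-fold iterate of `s`. -/
theorem iterate_preimage_count (M a : ℝ) (ha1 : 1 < a) (ha2 : a < 2) (hM : 1 < M)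
    (m : ℕ) (hm : 1 ≤ m) (j : ℤ) (hj : 1 ≤ j) :
    {n : ℕ | (sZ M a)^[m] (n : ℤ) = j}.Finite ∧
      (({n : ℕ | (sZ M a)^[m] (n : ℤ) = j}.ncard : ℝ) ≤ 3 * a / (a - 1) * a ^ m) := by
  have ha : (0 : ℝ) < a := by linarith
  obtain ⟨u, hu⟩ := sZ_interval M a ha j m
  set T : Set ℕ := {n : ℕ | (sZ M a)^[m] (n : ℤ) = j} with hT
  set L : ℝ := Laux a m with hL
  set k : ℤ := ⌈u⌉ with hk
  set K : ℤ := ⌈L⌉ with hK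
  have hLnn : 0 ≤ L := Laux_nonneg a ha m
  have hKnn : 0 ≤ K := Int.ceil_nonneg hLnn
  have hsub : ∀ n : ℕ, n ∈ T → (n : ℤ) ∈ Set.Ico k (k + K) := by
    intro n hn
    obtain ⟨h1, h2⟩ := hu (n : ℤ) hn
    push_cast at h1 h2
    constructor
    · exact Int.ceil_le.mpr (by exact_mod_cast h1)
    · have : (n : ℝ) < ((k : ℝ) + (K : ℝ)) := by
        have := Int.le_ceil u
        have := Int.le_ceil L
        linarith
      exact_mod_cast this
  have hfin : T.Finite := by
    apply Set.Finite.subset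
      (((Set.finite_Ico k (k + K)).preimage ((Nat.cast_injective : Function.Injective ((↑) : ℕ → ℤ)).injOn)))
    intro n hn
    exact hsub n hn
  refine ⟨hfin, ?_⟩
  have himg : ((↑) '' T : Set ℤ) ⊆ Set.Ico k (k + K) := by
    rintro _ ⟨n, hn, rfl⟩
    exact hsub n hn
  have hcard : (T.ncard : ℝ) ≤ (K.toNat : ℝ) := by
    have h1 : T.ncard = ((↑) '' T : Set ℤ).ncard :=
      (Set.ncard_image_of_injective T (Nat.cast_injective : Function.Injective ((↑) : ℕ → ℤ))).symm
    have h2 : ((↑) '' T : Set ℤ).ncard ≤ (Set.Ico k (k + K)).ncard :=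
      Set.ncard_le_ncard himg (Set.finite_Ico _ _)
    have h3 : (Set.Ico k (k + K)).ncard = K.toNat := by
      rw [← Finset.coe_Ico, Set.ncard_coe_finset, Int.card_Ico]
      simp
    rw [h1]
    exact_mod_cast h2.trans_eq h3
  have hKle : (K.toNat : ℝ) ≤ L + 1 := by
    have hKR : ((K.toNat : ℝ)) = (K : ℝ) := by exact_mod_cast Int.toNat_of_nonneg hKnn
    have := Int.ceil_lt_add_one L
    rw [hKR]
    simp only [hK]
    linarith
  have hQ : (a - 1) * (L + 1) + 1 ≤ 3 * a * a ^ m := Laux_bound a ha1 m hm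
  have hpm : (0 : ℝ) < a ^ m := pow_pos ha m
  rw [div_mul_eq_mul_div, le_div_iff₀ (by linarith : (0 : ℝ) < a - 1)]
  nlinarith
end
end

section
/- Let γ = {b₁ < b₂ < … < b_k} ⊂ ℤ+1/2 be finite with k ≥ 2. Then the cover size satisfies 𝒩(γ) ≥ ∑_{j=1}^{k−1} (1 + ⌊log₂(b_{j+1} − b_j)⌋) (the logarithmic length of γ). -/
noncomputable section

/-- Every point of `γ` is covered by some interval of the greedy cover (with enough fuel). -/
lemma coverAux_covers (n : ℕ) (fuel : ℕ) :
    ∀ (γ : Finset ℤ), γ.card ≤ fuel → ∀ x ∈ γ,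
      ∃ c ∈ coverAux n fuel γ, c ≤ x ∧ x < c + 2 ^ n := by
  induction fuel with
  | zero =>
    intro γ hf x hx
    rw [Nat.le_zero, Finset.card_eq_zero] at hf
    simp [hf] at hx
  | succ f ih =>
    intro γ hf x hx
    have hne : γ.Nonempty := ⟨x, hx⟩
    rw [coverAux, dif_pos hne]
    by_cases hc : x < γ.min' hne + 2 ^ n
    · exact ⟨γ.min' hne, Finset.mem_insert_self _ _, γ.min'_le x hx, hc⟩
    · have hx' : x ∈ γ.filter fun y => γ.min' hne + 2 ^ n ≤ y := by
        simp [Finset.mem_filter, hx, not_lt.mp hc]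
      have hsub : (γ.filter fun y => γ.min' hne + 2 ^ n ≤ y) ⊆ γ.erase (γ.min' hne) := by
        intro y hy
        rw [Finset.mem_filter] at hy
        refine Finset.mem_erase.mpr ⟨?_, hy.1⟩
        have h2 : (0:ℤ) < 2 ^ n := by positivity
        intro h; subst h; omega
      have hcard : (γ.filter fun y => γ.min' hne + 2 ^ n ≤ y).card ≤ f := by
        have := Finset.card_le_card hsub
        rw [Finset.card_erase_of_mem (γ.min'_mem hne)] at this
        have hpos : 0 < γ.card := Finset.card_pos.mpr hne
        omega
      obtain ⟨c, hcmem, h1, h2⟩ := ih _ hcard x hx'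
      exact ⟨c, Finset.mem_insert_of_mem hcmem, h1, h2⟩

lemma cover_covers (n : ℕ) (γ : Finset ℤ) {x : ℤ} (hx : x ∈ γ) :
    ∃ c ∈ cover n γ, c ≤ x ∧ x < c + 2 ^ n :=
  coverAux_covers n γ.card γ le_rfl x hx

/-- At scale `n`, the number of consecutive gaps of size at least `2 ^ n` is at most the number
of greedy cover intervals: consecutive elements separated by `≥ 2 ^ n` cannot share an interval. -/
lemma filter_gap_card_le (n : ℕ) (γ : Finset ℤ) :
    (((Finset.range (γ.card - 1)).filter fun j =>
      2 ^ n ≤ (((γ.sort (· ≤ ·)).getD (j + 1) 0 - (γ.sort (· ≤ ·)).getD j 0).toNat)).card)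
    ≤ (cover n γ).card := by
  classical
  set l := γ.sort (· ≤ ·) with hl
  have hlen : l.length = γ.card := Finset.length_sort _
  have hmemγ : ∀ j, j < l.length → l.getD j 0 ∈ γ := by
    intro j hj
    rw [List.getD_eq_getElem l 0 hj]
    exact (Finset.mem_sort _).mp (List.getElem_mem hj)
  have hmono : ∀ i j, i ≤ j → j < l.length → l.getD i 0 ≤ l.getD j 0 := by
    intro i j hij hj
    have hi : i < l.length := lt_of_le_of_lt (by omega) hj
    rw [List.getD_eq_getElem l 0 hi, List.getD_eq_getElem l 0 hj]
    rcases eq_or_lt_of_le hij with h | h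
    · subst h; rfl
    · exact (Finset.pairwise_sort (s := γ) (r := (· ≤ ·))).rel_get_of_lt (by simpa using h)
  set P : ℕ → Prop := fun j => ∃ c ∈ cover n γ, c ≤ l.getD (j + 1) 0 ∧ l.getD (j + 1) 0 < c + 2 ^ n with hP
  have hPall : ∀ j, j < γ.card - 1 → P j := by
    intro j hj
    exact cover_covers n γ (hmemγ (j + 1) (by omega))
  set f : ℕ → ℤ := fun j => if h : P j then h.choose else 0 with hf
  apply Finset.card_le_card_of_injOn f
  · intro j hj
    rw [Finset.mem_coe, Finset.mem_filter, Finset.mem_range] at hj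
    have hp := hPall j hj.1
    simp only [hf, dif_pos hp]
    exact hp.choose_spec.1
  · have key : ∀ a b : ℕ, a ∈ (Finset.range (γ.card - 1)).filter (fun j =>
        2 ^ n ≤ (((l.getD (j + 1) 0 - l.getD j 0).toNat))) →
        b ∈ (Finset.range (γ.card - 1)).filter (fun j =>
        2 ^ n ≤ (((l.getD (j + 1) 0 - l.getD j 0).toNat))) → a < b → f a ≠ f b := by
      intro a b ha hb hab heq
      rw [Finset.mem_filter, Finset.mem_range] at ha hb
      have hpa := hPall a ha.1
      have hpb := hPall b hb.1
      simp only [hf, dif_pos hpa, dif_pos hpb] at heq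
      obtain ⟨hca, h1a, h2a⟩ := hpa.choose_spec
      obtain ⟨hcb, h1b, h2b⟩ := hpb.choose_spec
      rw [heq] at h1a h2a
      have hgap : ((2:ℤ) ^ n) ≤ l.getD (b + 1) 0 - l.getD b 0 := by
        have := hb.2
        have h2 : ((2:ℕ) ^ n : ℤ) = (2:ℤ) ^ n := by push_cast; ring
        omega
      have hle : l.getD (a + 1) 0 ≤ l.getD b 0 := hmono (a + 1) b (by omega) (by omega)
      omega
    intro a ha b hb heq
    by_contra hne
    rcases lt_or_gt_of_ne hne with h | h
    · exact key a b ha hb h heq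
    · exact key b a hb ha h heq.symm

/-- the cover size dominates the logarithmic length
`∑_{j=1}^{k−1} (1 + ⌊log₂(b_{j+1} − b_j)⌋)`, where `b₁ < … < b_k` are the elements
of `γ` (listed by `Finset.sort`); `⌊log₂ m⌋ = Nat.log 2 m` for `m ≥ 1`. -/
theorem coverSize_ge_log_length (γ : Finset ℤ) (hk : 2 ≤ γ.card) :
    ∑ j ∈ Finset.range (γ.card - 1),
        (1 + Nat.log 2 (((γ.sort (· ≤ ·)).getD (j + 1) 0 - (γ.sort (· ≤ ·)).getD j 0).toNat))
      ≤ coverSize γ := by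
  classical
  have hne : γ.Nonempty := Finset.card_pos.mp (by omega)
  set l := γ.sort (· ≤ ·) with hl
  have hlen : l.length = γ.card := Finset.length_sort _
  set g : ℕ → ℕ := fun j => (l.getD (j + 1) 0 - l.getD j 0).toNat with hg
  have hmemγ : ∀ j, j < l.length → l.getD j 0 ∈ γ := by
    intro j hj
    rw [List.getD_eq_getElem l 0 hj]
    exact (Finset.mem_sort _).mp (List.getElem_mem hj)
  have hdiam : diamZ γ = γ.max' hne - γ.min' hne := by
    rw [diamZ, ← Finset.coe_max' hne, ← Finset.coe_min' hne]
    rfl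
  have hgap : ∀ j, j < γ.card - 1 → 1 ≤ g j ∧ Nat.log 2 (g j) ≤ n0 γ := by
    intro j hj
    have hj1 : j + 1 < l.length := by omega
    have hjl : j < l.length := by omega
    have hlt : l.getD j 0 < l.getD (j + 1) 0 := by
      rw [List.getD_eq_getElem l 0 hjl, List.getD_eq_getElem l 0 hj1]
      exact (Finset.sortedLT_sort γ).pairwise.rel_get_of_lt (by simp)
    have hub : l.getD (j + 1) 0 ≤ γ.max' hne := Finset.le_max' _ _ (hmemγ _ hj1)
    have hlb : γ.min' hne ≤ l.getD j 0 := Finset.min'_le _ _ (hmemγ _ hjl)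
    constructor
    · simp only [hg]; omega
    · apply Nat.log_mono_right
      rw [hg]
      apply Int.toNat_le_toNat
      rw [hdiam]; omega
  have hsummand : ∀ j, j < γ.card - 1 →
      1 + Nat.log 2 (g j) =
        ((Finset.range (n0 γ + 1)).filter fun m => 2 ^ m ≤ g j).card := by
    intro j hj
    obtain ⟨h1, h2⟩ := hgap j hj
    have : ((Finset.range (n0 γ + 1)).filter fun m => 2 ^ m ≤ g j)
        = Finset.range (Nat.log 2 (g j) + 1) := by
      ext m
      simp only [Finset.mem_filter, Finset.mem_range]
      rw [← Nat.le_log_iff_pow_le one_lt_two (by omega)]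
      omega
    rw [this, Finset.card_range]; omega
  calc ∑ j ∈ Finset.range (γ.card - 1), (1 + Nat.log 2 (g j))
      = ∑ j ∈ Finset.range (γ.card - 1),
          ((Finset.range (n0 γ + 1)).filter fun m => 2 ^ m ≤ g j).card := by
        apply Finset.sum_congr rfl
        intro j hj
        exact hsummand j (Finset.mem_range.mp hj)
    _ = ∑ j ∈ Finset.range (γ.card - 1), ∑ m ∈ Finset.range (n0 γ + 1),
          if 2 ^ m ≤ g j then 1 else 0 := by
        apply Finset.sum_congr rfl
        intro j _
        rw [Finset.card_filter]
    _ = ∑ m ∈ Finset.range (n0 γ + 1), ∑ j ∈ Finset.range (γ.card - 1),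
          if 2 ^ m ≤ g j then 1 else 0 := Finset.sum_comm
    _ = ∑ m ∈ Finset.range (n0 γ + 1),
          ((Finset.range (γ.card - 1)).filter fun j => 2 ^ m ≤ g j).card := by
        apply Finset.sum_congr rfl
        intro m _
        rw [Finset.card_filter]
    _ ≤ ∑ m ∈ Finset.range (n0 γ + 1), (cover m γ).card := by
        apply Finset.sum_le_sum
        intro m _
        exact filter_gap_card_le m γ
    _ = coverSize γ := rfl
end
end

section
/- Let a > 0 and b ≥ 1 be reals and let φ:ℕ_{≥1}→ℕ_{≥1} satisfy |{m : φ(m) = N}| ≤ b·e^{aN} for every N ≥ 1. Then for every integer R ≥ 1, ∑_{n=1}^{∞} |{(m₁,…,mₙ) ∈ ℕ_{≥1}ⁿ : ∑_{k=1}^{n} φ(m_k) ≤ R}| ≤ e^{(a + log(2b))·R}. -/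
open Finset

private lemma sum_range_choose_eq' (n R : ℕ) :
    ∑ i ∈ Finset.range R, i.choose n = R.choose (n + 1) := by
  induction R with
  | zero => simp
  | succ R ih =>
    rw [Finset.sum_range_succ, ih, Nat.choose_succ_succ', Nat.add_comm]

private lemma sum_Icc_choose_sub (n R : ℕ) :
    ∑ N ∈ Finset.Icc 1 R, (R - N).choose n = R.choose (n + 1) := by
  rw [← sum_range_choose_eq' n R]
  apply Finset.sum_nbij' (i := fun N => R - N) (j := fun M => R - M)
  · intro x hx; rw [Finset.mem_Icc] at hx; rw [Finset.mem_range]; omega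
  · intro x hx; rw [Finset.mem_range] at hx; rw [Finset.mem_Icc]; omega
  · intro x hx; rw [Finset.mem_Icc] at hx; omega
  · intro x hx; rw [Finset.mem_range] at hx; omega
  · intro x hx; rfl

/-- counting tuples of positive integers with bounded `φ`-sum.
Tuples of length `n ≥ 1` are encoded as functions `Fin (n+1) → ℕ` (all entries `≥ 1`),
the series over all lengths `n ≥ 1` being the `tsum` over `n : ℕ` of the count for
length `n + 1`.  Since the counted sets are finite and only finitely many lengths
contribute, the statement also asserts finiteness and summability. -/
theorem tuple_count_bound (a b : ℝ) (ha : 0 < a) (hb : 1 ≤ b) (φ : ℕ → ℕ)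
    (hφ1 : ∀ m : ℕ, 1 ≤ m → 1 ≤ φ m)
    (hcount : ∀ N : ℕ, 1 ≤ N → {m : ℕ | 1 ≤ m ∧ φ m = N}.Finite ∧
      (({m : ℕ | 1 ≤ m ∧ φ m = N}.ncard : ℝ) ≤ b * Real.exp (a * N)))
    (R : ℕ) (hR : 1 ≤ R) :
    (∀ n : ℕ, {v : Fin (n + 1) → ℕ | (∀ k, 1 ≤ v k) ∧ ∑ k, φ (v k) ≤ R}.Finite) ∧
    Summable (fun n : ℕ =>
      ({v : Fin (n + 1) → ℕ | (∀ k, 1 ≤ v k) ∧ ∑ k, φ (v k) ≤ R}.ncard : ℝ)) ∧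
    ∑' n : ℕ, ({v : Fin (n + 1) → ℕ | (∀ k, 1 ≤ v k) ∧ ∑ k, φ (v k) ≤ R}.ncard : ℝ)
      ≤ Real.exp ((a + Real.log (2 * b)) * R) := by
  classical
  have hb0 : 0 < b := lt_of_lt_of_le one_pos hb
  -- finiteness of fibers for all N
  have hfin : ∀ N, {m : ℕ | 1 ≤ m ∧ φ m = N}.Finite := by
    intro N
    rcases Nat.eq_zero_or_pos N with h0 | h1
    · subst h0
      convert Set.finite_empty
      ext m
      simp only [Set.mem_setOf_eq, Set.mem_empty_iff_false, iff_false, not_and]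
      intro hm
      have := hφ1 m hm
      omega
    · exact (hcount N h1).1
  set F : ℕ → Finset ℕ := fun N => (hfin N).toFinset with hFdef
  have hFmem : ∀ N m, m ∈ F N ↔ 1 ≤ m ∧ φ m = N := by
    intro N m
    simp [hFdef, Set.Finite.mem_toFinset]
  have hFcard : ∀ N : ℕ, 1 ≤ N → ((F N).card : ℝ) ≤ b * Real.exp (a * N) := by
    intro N hN
    have h := (hcount N hN).2
    rw [Set.ncard_eq_toFinset_card _ (hfin N)] at h
    exact h
  -- the finsets of tuples
  set T : (n : ℕ) → ℕ → Finset (Fin n → ℕ) := fun n R' =>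
    (Fintype.piFinset fun _ : Fin n => (Finset.range (R' + 1)).biUnion F).filter
      (fun v => (∀ k, 1 ≤ v k) ∧ ∑ k, φ (v k) ≤ R') with hTdef
  have hT : ∀ n R', ↑(T n R') = {v : Fin n → ℕ | (∀ k, 1 ≤ v k) ∧ ∑ k, φ (v k) ≤ R'} := by
    intro n R'
    ext v
    simp only [hTdef, Finset.coe_filter, Set.mem_setOf_eq, Fintype.mem_piFinset,
      Finset.mem_biUnion, Finset.mem_range]
    constructor
    · rintro ⟨-, h⟩; exact h
    · intro h
      refine ⟨fun k => ⟨φ (v k), ?_, (hFmem _ _).2 ⟨h.1 k, rfl⟩⟩, h⟩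
      have hle : φ (v k) ≤ ∑ j, φ (v j) :=
        Finset.single_le_sum (f := fun j => φ (v j)) (fun _ _ => Nat.zero_le _) (Finset.mem_univ k)
      omega
  -- the key cardinality bound
  have hTcard : ∀ n R', ((T n R').card : ℝ) ≤ b ^ n * Real.exp (a * R') * (R'.choose n) := by
    intro n
    induction n with
    | zero =>
      intro R'
      have h1 : (T 0 R').card ≤ 1 :=
        Finset.card_le_one.mpr (fun x _ y _ => Subsingleton.elim x y)
      have h2 : ((T 0 R').card : ℝ) ≤ 1 := by exact_mod_cast h1
      have h3 : (1 : ℝ) ≤ Real.exp (a * R') := by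
        rw [Real.one_le_exp_iff]
        positivity
      simpa using h2.trans h3
    | succ n ih =>
      intro R'
      -- injection into a sigma finset
      have hinj : (T (n + 1) R').card ≤
          ((Finset.Icc 1 R').sigma (fun N => F N ×ˢ T n (R' - N))).card := by
        apply Finset.card_le_card_of_injOn
          (fun v => ⟨φ (v 0), v 0, Fin.tail v⟩)
        · intro v hv
          have hv' : (∀ k, 1 ≤ v k) ∧ ∑ k, φ (v k) ≤ R' := by
            have : v ∈ ({v : Fin (n+1) → ℕ | (∀ k, 1 ≤ v k) ∧ ∑ k, φ (v k) ≤ R'} : Set _) := by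
              rw [← hT]; exact hv
            exact this
          obtain ⟨h1, h2⟩ := hv'
          have hsplit : ∑ k, φ (v k) = φ (v 0) + ∑ k : Fin n, φ (Fin.tail v k) := by
            rw [Fin.sum_univ_succ]; rfl
          have hφ0 : 1 ≤ φ (v 0) := hφ1 _ (h1 0)
          have htail : ∑ k : Fin n, φ (Fin.tail v k) ≤ R' - φ (v 0) := by omega
          simp only [Finset.mem_coe, Finset.mem_sigma, Finset.mem_Icc, Finset.mem_product]
          refine ⟨⟨hφ0, by omega⟩, (hFmem _ _).2 ⟨h1 0, rfl⟩, ?_⟩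
          have : Fin.tail v ∈ ({w : Fin n → ℕ |
              (∀ k, 1 ≤ w k) ∧ ∑ k, φ (w k) ≤ R' - φ (v 0)} : Set _) :=
            ⟨fun k => h1 k.succ, htail⟩
          rw [← hT] at this
          exact this
        · intro v hv w hw h
          simp only [Sigma.mk.inj_iff] at h
          obtain ⟨h1, h2⟩ := h
          have h2' : (v 0, Fin.tail v) = (w 0, Fin.tail w) := eq_of_heq h2
          obtain ⟨h3, h4⟩ := Prod.mk.inj h2'
          rw [← Fin.cons_self_tail v, ← Fin.cons_self_tail w, h3, h4]
      have hcards : (((Finset.Icc 1 R').sigma (fun N => F N ×ˢ T n (R' - N))).card : ℝ)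
          = ∑ N ∈ Finset.Icc 1 R', ((F N).card : ℝ) * ((T n (R' - N)).card : ℝ) := by
        rw [Finset.card_sigma]
        push_cast [Finset.card_product]
        rfl
      have hterm : ∀ N ∈ Finset.Icc 1 R',
          ((F N).card : ℝ) * ((T n (R' - N)).card : ℝ)
            ≤ b ^ (n + 1) * Real.exp (a * R') * (((R' - N).choose n : ℕ) : ℝ) := by
        intro N hN
        rw [Finset.mem_Icc] at hN
        have e1 := hFcard N hN.1
        have e2 := ih (R' - N)
        have hexp : Real.exp (a * N) * Real.exp (a * ((R' - N : ℕ) : ℝ)) = Real.exp (a * R') := by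
          rw [← Real.exp_add, ← mul_add]
          congr 1
          have : ((R' - N : ℕ) : ℝ) = (R' : ℝ) - (N : ℝ) := by
            push_cast [Nat.cast_sub hN.2]; ring
          rw [this]; ring
        calc ((F N).card : ℝ) * ((T n (R' - N)).card : ℝ)
            ≤ (b * Real.exp (a * N)) * (b ^ n * Real.exp (a * ((R' - N : ℕ) : ℝ)) *
              (((R' - N).choose n : ℕ) : ℝ)) := by
              apply mul_le_mul e1 e2 (by positivity) (by positivity)
          _ = b ^ (n + 1) * (Real.exp (a * N) * Real.exp (a * ((R' - N : ℕ) : ℝ))) *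
              (((R' - N).choose n : ℕ) : ℝ) := by ring
          _ = b ^ (n + 1) * Real.exp (a * R') * (((R' - N).choose n : ℕ) : ℝ) := by
              rw [hexp]
      calc ((T (n + 1) R').card : ℝ)
          ≤ (((Finset.Icc 1 R').sigma (fun N => F N ×ˢ T n (R' - N))).card : ℝ) := by
            exact_mod_cast hinj
        _ = ∑ N ∈ Finset.Icc 1 R', ((F N).card : ℝ) * ((T n (R' - N)).card : ℝ) := hcards
        _ ≤ ∑ N ∈ Finset.Icc 1 R',
              b ^ (n + 1) * Real.exp (a * R') * (((R' - N).choose n : ℕ) : ℝ) :=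
            Finset.sum_le_sum hterm
        _ = b ^ (n + 1) * Real.exp (a * R') *
              ((∑ N ∈ Finset.Icc 1 R', (R' - N).choose n : ℕ) : ℝ) := by
            rw [← Finset.mul_sum]
            push_cast
            ring
        _ = b ^ (n + 1) * Real.exp (a * R') * (R'.choose (n + 1) : ℝ) := by
            rw [sum_Icc_choose_sub]
  -- identify ncard with finset card
  have hncard : ∀ n : ℕ,
      ({v : Fin (n + 1) → ℕ | (∀ k, 1 ≤ v k) ∧ ∑ k, φ (v k) ≤ R}.ncard : ℝ)
        = ((T (n + 1) R).card : ℝ) := by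
    intro n
    rw [← hT (n + 1) R, Set.ncard_coe_finset]
  have hfinset : ∀ n : ℕ, {v : Fin (n + 1) → ℕ | (∀ k, 1 ≤ v k) ∧ ∑ k, φ (v k) ≤ R}.Finite := by
    intro n
    rw [← hT (n + 1) R]
    exact (T (n + 1) R).finite_toSet
  -- vanishing for n ≥ R
  have hzero : ∀ n : ℕ, n ∉ Finset.range R →
      ({v : Fin (n + 1) → ℕ | (∀ k, 1 ≤ v k) ∧ ∑ k, φ (v k) ≤ R}.ncard : ℝ) = 0 := by
    intro n hn
    rw [Finset.mem_range, not_lt] at hn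
    have hempty : {v : Fin (n + 1) → ℕ | (∀ k, 1 ≤ v k) ∧ ∑ k, φ (v k) ≤ R} = ∅ := by
      ext v
      simp only [Set.mem_setOf_eq, Set.mem_empty_iff_false, iff_false, not_and]
      intro h1 h2
      have hge : (n + 1 : ℕ) ≤ ∑ k, φ (v k) := by
        calc (n + 1 : ℕ) = ∑ _k : Fin (n + 1), 1 := by simp
          _ ≤ ∑ k, φ (v k) := Finset.sum_le_sum (fun k _ => hφ1 _ (h1 k))
      omega
    rw [hempty]
    simp
  refine ⟨hfinset, ?_, ?_⟩
  · exact summable_of_ne_finset_zero hzero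
  · rw [tsum_eq_sum hzero]
    have step1 : ∑ n ∈ Finset.range R,
        ({v : Fin (n + 1) → ℕ | (∀ k, 1 ≤ v k) ∧ ∑ k, φ (v k) ≤ R}.ncard : ℝ)
        ≤ ∑ n ∈ Finset.range R, b ^ (n + 1) * Real.exp (a * R) * (R.choose (n + 1) : ℝ) := by
      apply Finset.sum_le_sum
      intro n _
      rw [hncard n]
      exact hTcard (n + 1) R
    have step2 : ∑ n ∈ Finset.range R, b ^ (n + 1) * Real.exp (a * R) * (R.choose (n + 1) : ℝ)
        ≤ Real.exp (a * R) * (b + 1) ^ R := by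
      have hbinom : (b + 1) ^ R = ∑ k ∈ Finset.range (R + 1), b ^ k * (R.choose k : ℝ) := by
        rw [add_pow]
        apply Finset.sum_congr rfl
        intro k _
        rw [one_pow]
        ring
      have hsplit : ∑ k ∈ Finset.range (R + 1), b ^ k * (R.choose k : ℝ)
          = (∑ n ∈ Finset.range R, b ^ (n + 1) * (R.choose (n + 1) : ℝ)) + 1 := by
        rw [Finset.sum_range_succ']
        simp
      have h1 : ∑ n ∈ Finset.range R, b ^ (n + 1) * (R.choose (n + 1) : ℝ) ≤ (b + 1) ^ R := by
        rw [hbinom, hsplit]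
        linarith
      calc ∑ n ∈ Finset.range R, b ^ (n + 1) * Real.exp (a * R) * (R.choose (n + 1) : ℝ)
          = Real.exp (a * R) * ∑ n ∈ Finset.range R, b ^ (n + 1) * (R.choose (n + 1) : ℝ) := by
            rw [Finset.mul_sum]
            apply Finset.sum_congr rfl
            intro n _
            ring
        _ ≤ Real.exp (a * R) * (b + 1) ^ R := by
            apply mul_le_mul_of_nonneg_left h1 (Real.exp_pos _).le
    have step3 : Real.exp (a * R) * (b + 1) ^ R ≤ Real.exp ((a + Real.log (2 * b)) * R) := by
      have h2b : (0 : ℝ) < 2 * b := by linarith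
      have hrw : Real.exp ((a + Real.log (2 * b)) * R) = Real.exp (a * R) * (2 * b) ^ R := by
        rw [add_mul, Real.exp_add]
        congr 1
        rw [mul_comm (Real.log (2 * b)) (R : ℝ), Real.exp_nat_mul, Real.exp_log h2b]
      rw [hrw]
      apply mul_le_mul_of_nonneg_left _ (Real.exp_pos _).le
      apply pow_le_pow_left₀ (by linarith)
      linarith
    calc ∑ n ∈ Finset.range R,
        ({v : Fin (n + 1) → ℕ | (∀ k, 1 ≤ v k) ∧ ∑ k, φ (v k) ≤ R}.ncard : ℝ)
        ≤ Real.exp (a * R) * (b + 1) ^ R := step1.trans step2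
      _ ≤ Real.exp ((a + Real.log (2 * b)) * R) := step3
end

section
/- Let K > 0 and 0 < μ < ν < 1 be reals, and define ȳ = (μ/(Kν))^{1/(ν−μ)} · [ ((1−ν)/(1−μ))^{(1−ν)/(ν−μ)} − ((1−ν)/(1−μ))^{(1−μ)/(ν−μ)} ]. Then for all reals x ≥ 1 and y ≥ 1 with y > ȳ, one has K·x^ν − ((x+y)^μ − (y+1)^μ) ≥ 0. -/
open Real Set

/-- the min-max lemma on exponents (Lemma `expoentes`).
All powers are real powers (`Real.rpow`) of positive reals. -/
theorem minmax_exponent (K μ ν : ℝ) (hK : 0 < K) (hμ : 0 < μ) (hμν : μ < ν) (hν : ν < 1)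
    (x y : ℝ) (hx : 1 ≤ x) (hy : 1 ≤ y)
    (hybar : (μ / (K * ν)) ^ ((1 : ℝ) / (ν - μ)) *
        (((1 - ν) / (1 - μ)) ^ ((1 - ν) / (ν - μ)) -
          ((1 - ν) / (1 - μ)) ^ ((1 - μ) / (ν - μ))) < y) :
    0 ≤ K * x ^ ν - ((x + y) ^ μ - (y + 1) ^ μ) := by
  have hμ1 : μ < 1 := hμν.trans hν
  have hν0 : 0 < ν := hμ.trans hμν
  have hνμ : 0 < ν - μ := sub_pos.2 hμν
  have h1μ : 0 < 1 - μ := sub_pos.2 hμ1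
  have h1ν : 0 < 1 - ν := sub_pos.2 hν
  have hKν : 0 < K * ν := mul_pos hK hν0
  set q : ℝ := μ / (K * ν) with hq_def
  have hq : 0 < q := div_pos hμ hKν
  set c : ℝ := (1 - ν) / (1 - μ) with hc_def
  have hc : 0 < c := div_pos h1ν h1μ
  have hc1 : c < 1 := (div_lt_one h1μ).2 (by linarith)
  set A : ℝ := q ^ ((1 : ℝ) / (ν - μ)) with hA_def
  have hA : 0 < A := rpow_pos_of_pos hq _
  set a : ℝ := (1 - ν) / (ν - μ) with ha_def
  set b : ℝ := (1 - μ) / (ν - μ) with hb_def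
  set B : ℝ := q ^ ((1 : ℝ) / (1 - μ)) with hB_def
  have hB : 0 < B := rpow_pos_of_pos hq _
  set x₀ : ℝ := A * c ^ b with hx0_def
  have hx₀ : 0 < x₀ := mul_pos hA (rpow_pos_of_pos hc _)
  have h1c : 1 - c = (ν - μ) / (1 - μ) := by
    rw [hc_def]
    field_simp
    ring
  -- x₀ ^ (1 - c) = B * c
  have hx0c : x₀ ^ (1 - c) = B * c := by
    have e1 : (1 : ℝ) / (ν - μ) * (1 - c) = 1 / (1 - μ) := by
      rw [h1c]; field_simp
    have e2 : b * (1 - c) = 1 := by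
      rw [hb_def, h1c]; field_simp
    rw [hx0_def, Real.mul_rpow hA.le (rpow_pos_of_pos hc b).le, hA_def,
      ← Real.rpow_mul hq.le, ← Real.rpow_mul hc.le, e1, e2, Real.rpow_one, hB_def]
  -- c ^ b = c ^ a * c
  have hab : c ^ b = c ^ a * c := by
    have hba : b = a + 1 := by
      rw [ha_def, hb_def, div_add' _ _ _ hνμ.ne']
      ring_nf
    rw [hba, Real.rpow_add hc, Real.rpow_one]
  -- ybar = (1 - c)/c * x₀
  have hybar_eq : A * (c ^ a - c ^ b) = (1 - c) / c * x₀ := by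
    rw [hx0_def, hab]
    field_simp
  -- key derivative inequality
  have key : ∀ t : ℝ, 0 < t → μ * (t + y) ^ (μ - 1) ≤ K * ν * t ^ (ν - 1) := by
    intro t ht
    have hty : 0 < t + y := by linarith
    have young : t ^ c * x₀ ^ (1 - c) ≤ c * t + (1 - c) * x₀ :=
      Real.geom_mean_le_arith_mean2_weighted hc.le (by linarith) ht.le hx₀.le (by ring)
    have hBt : B * t ^ c ≤ t + y := by
      have h1 : B * t ^ c ≤ t + (1 - c) / c * x₀ := by
        rw [← mul_le_mul_iff_right₀ hc]
        have h2 : c * (B * t ^ c) = t ^ c * x₀ ^ (1 - c) := by rw [hx0c]; ring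
        have h3 : c * ((1 - c) / c * x₀) = (1 - c) * x₀ := by
          field_simp
        rw [h2, mul_add, h3]
        exact young
      calc B * t ^ c ≤ t + (1 - c) / c * x₀ := h1
        _ = t + A * (c ^ a - c ^ b) := by rw [hybar_eq]
        _ ≤ t + y := by linarith [hybar]
    have hBtc : 0 < B * t ^ c := mul_pos hB (rpow_pos_of_pos ht _)
    have hpow : (B * t ^ c) ^ (1 - μ) ≤ (t + y) ^ (1 - μ) :=
      Real.rpow_le_rpow hBtc.le hBt h1μ.le
    have hlhs : (B * t ^ c) ^ (1 - μ) = q * t ^ (1 - ν) := by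
      have e1 : (1 : ℝ) / (1 - μ) * (1 - μ) = 1 := by field_simp
      have e2 : c * (1 - μ) = 1 - ν := by
        rw [hc_def]; field_simp
      rw [Real.mul_rpow hB.le (rpow_pos_of_pos ht c).le, hB_def,
        ← Real.rpow_mul hq.le, ← Real.rpow_mul ht.le, e1, e2, Real.rpow_one]
    rw [hlhs] at hpow
    have hT : 0 < t ^ (1 - ν) := rpow_pos_of_pos ht _
    have hP : 0 < (t + y) ^ (1 - μ) := rpow_pos_of_pos hty _
    have hμ1' : μ - 1 = -(1 - μ) := by ring
    have hν1' : ν - 1 = -(1 - ν) := by ring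
    rw [hμ1', hν1', Real.rpow_neg hty.le, Real.rpow_neg ht.le,
      ← div_eq_mul_inv, ← div_eq_mul_inv, div_le_div_iff₀ hP hT]
    have h2 : K * ν * (q * t ^ (1 - ν)) ≤ K * ν * (t + y) ^ (1 - μ) :=
      mul_le_mul_of_nonneg_left hpow hKν.le
    have h3 : K * ν * (q * t ^ (1 - ν)) = μ * t ^ (1 - ν) := by
      rw [hq_def]
      field_simp
    linarith
  -- monotonicity of f on [1, ∞)
  set f : ℝ → ℝ := fun t => K * t ^ ν - (t + y) ^ μ with hf_def
  have hder : ∀ t : ℝ, 0 < t →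
      HasDerivAt f (K * (ν * t ^ (ν - 1)) - μ * (t + y) ^ (μ - 1) * 1) t := by
    intro t ht
    have hty : 0 < t + y := by linarith
    have h1 : HasDerivAt (fun s : ℝ => s ^ ν) (ν * t ^ (ν - 1)) t :=
      Real.hasDerivAt_rpow_const (Or.inl ht.ne')
    have h2 : HasDerivAt (fun s : ℝ => s + y) 1 t := (hasDerivAt_id t).add_const y
    have h3 : HasDerivAt (fun s : ℝ => s ^ μ) (μ * (t + y) ^ (μ - 1)) (t + y) :=
      Real.hasDerivAt_rpow_const (Or.inl hty.ne')
    have h4 := h3.comp t h2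
    exact (h1.const_mul K).sub h4
  have hmono : MonotoneOn f (Ici (1 : ℝ)) := by
    apply monotoneOn_of_deriv_nonneg (convex_Ici 1)
    · intro t ht
      have ht0 : (0 : ℝ) < t := lt_of_lt_of_le one_pos ht
      exact (hder t ht0).continuousAt.continuousWithinAt
    · intro t ht
      rw [interior_Ici] at ht
      exact ((hder t (lt_trans one_pos ht)).differentiableAt).differentiableWithinAt
    · intro t ht
      rw [interior_Ici] at ht
      have ht0 : (0 : ℝ) < t := lt_trans one_pos ht
      rw [(hder t ht0).deriv]
      have hk := key t ht0
      nlinarith [hk]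
  have hfx : f 1 ≤ f x := hmono self_mem_Ici hx hx
  have h1 : f 1 = K - (1 + y) ^ μ := by
    simp [hf_def, Real.one_rpow]
  have hcomm : (1 : ℝ) + y = y + 1 := by ring
  rw [h1, hcomm] at hfx
  have hfx2 : f x = K * x ^ ν - (x + y) ^ μ := rfl
  rw [hfx2] at hfx
  linarith
end
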